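/- Suppose Θ is a real skew-symmetric n×n matrix satisfying the Diophantine condition: there are C > 0, β ≥ 0 with inf_{k∈ℤⁿ}|Θq − 2πk| ≥ C/|q|^{1+β} for all q in 𝒦^{inf} (the set of q with Θq ∉ 2πℤⁿ after reduction). Then for Schwartz sequences l_q, r_q, the function t ↦ (4πt)^{n/2} ∑_{q,k∈ℤⁿ} l_q r_{−q} (4πt)^{−n/2} e^{−|Θq−2πk|²/4t} equals ∑_{q∈𝒵} l_q r_{−q} + O(t^N) as t → 0⁺ for every N > 0, where 𝒵 := {q ∈ ℤⁿ : Θq ∈ 2πℤⁿ}. -/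

import Mathlib

set_option maxHeartbeats 1000000


open Real Matrix Set

/-- Coercion of an integer vector to a real vector. -/
def intVec {n : ℕ} (k : Fin n → ℤ) : Fin n → ℝ := fun i => (k i : ℝ)

/-- Squared Euclidean norm on `ℝⁿ`. -/
noncomputable def sqnorm {n : ℕ} (x : Fin n → ℝ) : ℝ := ∑ i, x i ^ 2

/-- A sequence indexed by `ℤⁿ` of rapid (Schwartz) decay. -/
def RapidDecay {n : ℕ} (a : (Fin n → ℤ) → ℂ) : Prop :=
  ∀ m : ℕ, ∃ c : ℝ, ∀ q : Fin n → ℤ, ‖a q‖ * (1 + Real.sqrt (sqnorm (intVec q))) ^ m ≤ c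

/-- The set `𝒵 = {q ∈ ℤⁿ : Θq ∈ 2πℤⁿ}`. -/
def latticeZ {n : ℕ} (Θ : Matrix (Fin n) (Fin n) ℝ) : Set (Fin n → ℤ) :=
  {q | ∃ m : Fin n → ℤ, Θ.mulVec (intVec q) = (2 * Real.pi) • intVec m}

namespace Stmt5Aux
variable {n : ℕ}

lemma sqnorm_nonneg (x : Fin n → ℝ) : 0 ≤ sqnorm x :=
  Finset.sum_nonneg fun _ _ => sq_nonneg _

lemma intVec_add (a b : Fin n → ℤ) : intVec (a + b) = intVec a + intVec b := by
  funext i; simp [intVec]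

lemma intVec_sub (a b : Fin n → ℤ) : intVec (a - b) = intVec a - intVec b := by
  funext i; simp [intVec]

lemma intVec_zero : intVec (0 : Fin n → ℤ) = 0 := by
  funext i; simp [intVec]

lemma sqnorm_smul (c : ℝ) (x : Fin n → ℝ) : sqnorm (c • x) = c ^ 2 * sqnorm x := by
  simp [sqnorm, Finset.mul_sum, mul_pow]

lemma sqnorm_coord_le (x : Fin n → ℝ) (i : Fin n) : x i ^ 2 ≤ sqnorm x :=
  Finset.single_le_sum (fun j _ => sq_nonneg (x j)) (Finset.mem_univ i)

lemma one_le_sqnorm_intVec {q : Fin n → ℤ} (hq : q ≠ 0) : 1 ≤ sqnorm (intVec q) := by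
  obtain ⟨i, hi⟩ : ∃ i, q i ≠ 0 := by
    by_contra h; push_neg at h; exact hq (funext h)
  refine le_trans ?_ (sqnorm_coord_le (intVec q) i)
  have h1 : (1 : ℝ) ≤ |(q i : ℝ)| := by
    rw [← Int.cast_abs]; exact_mod_cast Int.one_le_abs hi
  calc (1:ℝ) = 1^2 := by ring
  _ ≤ |(q i : ℝ)|^2 := by nlinarith [abs_nonneg ((q i : ℝ))]
  _ = (intVec q i)^2 := by simp [intVec, sq_abs]

lemma sqnorm_intVec_neg (q : Fin n → ℤ) : sqnorm (intVec (-q)) = sqnorm (intVec q) := by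
  simp [sqnorm, intVec]

lemma key_lb (y : Fin n → ℝ) (k : Fin n → ℤ) :
    2 * π ^ 2 * sqnorm (intVec k) - sqnorm y ≤ sqnorm (y - (2 * π) • intVec k) := by
  rw [sqnorm, sqnorm, sqnorm, Finset.mul_sum, ← Finset.sum_sub_distrib]
  refine Finset.sum_le_sum fun i _ => ?_
  have : ((y - (2 * π) • intVec k) i) = y i - 2 * π * intVec k i := by
    simp [mul_comm]
  rw [this]
  nlinarith [sq_nonneg (2 * y i - 2 * π * intVec k i)]

lemma step (f : ℤ → ℝ) (h0 : ∀ z, 0 ≤ f z) (hf : Summable f) (m : ℕ)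
    (ih : Summable (fun k : Fin m → ℤ => ∏ i, f (k i))) :
    Summable (fun k : Fin (m+1) → ℤ => ∏ i, f (k i)) := by
  have h2 : Summable (fun x : ℤ × (Fin m → ℤ) => f x.1 * ∏ i, f (x.2 i)) :=
    Summable.mul_of_nonneg (g := fun k : Fin m → ℤ => ∏ i, f (k i)) hf ih (fun z => h0 z)
      (fun k => Finset.prod_nonneg fun i _ => h0 _)
  refine ((Fin.consEquiv (fun _ : Fin (m+1) => ℤ)).summable_iff
    (f := fun k : Fin (m+1) → ℤ => ∏ i, f (k i))).1 ?_
  refine h2.congr fun x => ?_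
  simp [Fin.consEquiv, Fin.prod_univ_succ]

lemma prodSummable (f : ℤ → ℝ) (h0 : ∀ z, 0 ≤ f z) (hf : Summable f) :
    ∀ n : ℕ, Summable (fun k : Fin n → ℤ => ∏ i, f (k i)) := by
  intro n
  induction n with
  | zero => exact summable_of_finite_support (Set.toFinite _)
  | succ m ih => exact step f h0 hf m ih

lemma summable_int_exp {c : ℝ} (hc : 0 < c) :
    Summable (fun z : ℤ => Real.exp (-c * (z : ℝ) ^ 2)) := by
  have hnat : Summable (fun m : ℕ => Real.exp (-c * (m : ℝ) ^ 2)) := by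
    refine Summable.of_nonneg_of_le (fun m => (Real.exp_pos _).le)
      (fun m => ?_) (summable_geometric_of_lt_one (Real.exp_pos (-c)).le ?_)
    · rw [← Real.exp_nat_mul]
      apply Real.exp_le_exp.2
      have h1 : (m : ℝ) ≤ (m:ℝ)^2 := by
        exact_mod_cast Nat.le_self_pow two_ne_zero m
      nlinarith
    · exact Real.exp_lt_one_iff.2 (by linarith)
  exact Summable.of_nat_of_neg hnat (hnat.congr fun m => by push_cast; ring_nf)

lemma summable_int_inv_sq :
    Summable (fun z : ℤ => 2 / (1 + |(z : ℝ)|) ^ 2) := by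
  have hnat : Summable (fun m : ℕ => 2 / (1 + |(m : ℝ)|) ^ 2) := by
    have h := (Real.summable_one_div_nat_pow (p := 2)).2 (by norm_num)
    have h1 := (summable_nat_add_iff (f := fun m : ℕ => 1 / (m:ℝ)^2) 1).2 h
    refine (h1.mul_left 2).of_nonneg_of_le (fun m => by positivity) (fun m => ?_)
    rw [abs_of_nonneg (by positivity), mul_one_div]
    gcongr
    push_cast; linarith
  exact Summable.of_nat_of_neg hnat (hnat.congr fun m => by simp)

lemma summable_base (n : ℕ) :
    Summable (fun k : Fin n → ℤ => Real.exp (-(π^2/4) * sqnorm (intVec k))) := by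
  have h := prodSummable (fun z : ℤ => Real.exp (-(π^2/4) * (z:ℝ)^2))
    (fun z => (Real.exp_pos _).le) (summable_int_exp (by positivity)) n
  refine h.congr fun k => ?_
  rw [← Real.exp_sum]
  congr 1
  rw [sqnorm, Finset.mul_sum]
  simp [intVec]

noncomputable def Bc (n : ℕ) : ℝ := ∑' k : Fin n → ℤ, Real.exp (-(π^2/4) * sqnorm (intVec k))
noncomputable def Ac (n : ℕ) : ℝ := Real.exp (n * π^2/8) * Bc n

lemma gker_bound (y : Fin n → ℝ) :
    Summable (fun k : Fin n → ℤ => Real.exp (-(sqnorm (y - (2*π) • intVec k) / 8))) ∧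
    (∑' k : Fin n → ℤ, Real.exp (-(sqnorm (y - (2*π) • intVec k) / 8))) ≤ Ac n := by
  set F : (Fin n → ℤ) → ℝ := fun k => Real.exp (-(sqnorm (y - (2*π) • intVec k) / 8)) with hF
  set m : Fin n → ℤ := fun i => round (y i / (2*π)) with hm
  set y' : Fin n → ℝ := y - (2*π) • intVec m with hy'def
  have hππ : (0:ℝ) < 2*π := by positivity
  have hy' : sqnorm y' ≤ n * π^2 := by
    rw [sqnorm]
    calc ∑ i, (y' i)^2 ≤ ∑ _i : Fin n, π^2 := by
          refine Finset.sum_le_sum fun i _ => ?_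
          have hyi : y' i = 2*π * (y i / (2*π) - round (y i / (2*π))) := by
            rw [hy'def]
            simp only [Pi.sub_apply, Pi.smul_apply, smul_eq_mul]
            field_simp [intVec, hm]
            simp only [intVec, hm]
          have habs : |y' i| ≤ π := by
            rw [hyi, abs_mul, abs_of_pos hππ]
            have := abs_sub_round (y i / (2*π))
            nlinarith [Real.pi_pos]
          calc (y' i)^2 = |y' i|^2 := (sq_abs _).symm
          _ ≤ π^2 := by nlinarith [abs_nonneg (y' i), Real.pi_pos]
    _ = n * π^2 := by simp [Finset.sum_const, mul_comm]
  have key : ∀ k : Fin n → ℤ, F (k + m)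
      ≤ Real.exp (n*π^2/8) * Real.exp (-(π^2/4) * sqnorm (intVec k)) := by
    intro k
    have h1 : y - (2*π) • intVec (k+m) = y' - (2*π) • intVec k := by
      rw [intVec_add, hy'def, smul_add]; abel
    rw [hF]
    simp only [h1]
    rw [← Real.exp_add]
    apply Real.exp_le_exp.2
    have h2 := key_lb y' k
    linarith
  have hbund : Summable (fun k : Fin n → ℤ =>
      Real.exp (n*π^2/8) * Real.exp (-(π^2/4) * sqnorm (intVec k))) :=
    (summable_base n).mul_left _
  have hshift : Summable (fun k => F (k + m)) :=
    Summable.of_nonneg_of_le (fun k => (Real.exp_pos _).le) key hbund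
  have hs : Summable F := ((Equiv.addRight m).summable_iff (f := F)).1 hshift
  refine ⟨hs, ?_⟩
  have heq : ∑' k, F k = ∑' k, F (k + m) := ((Equiv.addRight m).tsum_eq F).symm
  rw [heq]
  calc ∑' k, F (k + m) ≤ ∑' k : Fin n → ℤ,
        Real.exp (n*π^2/8) * Real.exp (-(π^2/4) * sqnorm (intVec k)) :=
        Summable.tsum_le_tsum key hshift hbund
  _ = Real.exp (n*π^2/8) * Bc n := by rw [tsum_mul_left]; rfl
  _ = Ac n := rfl

lemma Ac_nonneg (n : ℕ) : 0 ≤ Ac n := by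
  have h := gker_bound (n := n) 0
  have h2 := Summable.le_tsum h.1 0 (fun k _ => (Real.exp_pos _).le)
  have h1 : (0:ℝ) < Real.exp (-(sqnorm ((0:Fin n → ℝ) - (2*π) • intVec 0) / 8)) :=
    Real.exp_pos _
  linarith [h.2]

noncomputable def Fdec {n : ℕ} (q : Fin n → ℤ) : ℝ := ∏ i, 2 / (1 + |(q i : ℝ)|) ^ 2

lemma Fdec_nonneg (q : Fin n → ℤ) : 0 ≤ Fdec q :=
  Finset.prod_nonneg fun i _ => by positivity

lemma Fdec_summable (n : ℕ) : Summable (Fdec (n := n)) :=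
  prodSummable _ (fun z => by positivity) summable_int_inv_sq n

lemma Fdec_ge (q : Fin n → ℤ) :
    1 / (1 + Real.sqrt (sqnorm (intVec q))) ^ (2*n) ≤ Fdec q := by
  set s := Real.sqrt (sqnorm (intVec q)) with hs
  have hs0 : 0 ≤ s := Real.sqrt_nonneg _
  have hs2 : s^2 = sqnorm (intVec q) := Real.sq_sqrt (sqnorm_nonneg _)
  have hX : (0:ℝ) < (1 + s) ^ (2*n) := by positivity
  rw [div_le_iff₀ hX]
  have hrw : (1 + s) ^ (2*n) = ∏ _i : Fin n, (1+s)^2 := by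
    rw [Finset.prod_const, Finset.card_univ, Fintype.card_fin, ← pow_mul, mul_comm 2 n]
  rw [hrw, Fdec, ← Finset.prod_mul_distrib]
  have hone : (1:ℝ) = ∏ _i : Fin n, (1:ℝ) := by simp
  rw [hone]
  refine Finset.prod_le_prod (fun i _ => zero_le_one) fun i _ => ?_
  have hcoord : ((q i : ℝ))^2 ≤ s^2 := by
    rw [hs2]; exact sqnorm_coord_le (intVec q) i
  have habs : |(q i : ℝ)| ≤ s := by
    nlinarith [abs_nonneg ((q i : ℝ)), sq_abs ((q i : ℝ))]
  rw [div_mul_eq_mul_div, le_div_iff₀ (by positivity)]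
  nlinarith [abs_nonneg ((q i : ℝ))]

lemma exp_bound {c t : ℝ} (hc : 0 < c) (ht : 0 < t) (m : ℕ) :
    Real.exp (-(c / Real.sqrt t)) ≤ (2*m).factorial * (1/c)^(2*m) * t^m := by
  have hst : 0 < Real.sqrt t := Real.sqrt_pos.2 ht
  set x := c / Real.sqrt t with hx
  have hxpos : 0 < x := by positivity
  have h1 : x^(2*m) / (2*m).factorial ≤ Real.exp x :=
    Real.pow_div_factorial_le_exp x hxpos.le (2*m)
  have hfac : (0:ℝ) < (2*m).factorial := by exact_mod_cast (2*m).factorial_pos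
  have hpow : (0:ℝ) < x^(2*m) := pow_pos hxpos _
  rw [Real.exp_neg]
  have h2 : (Real.exp x)⁻¹ ≤ ((2*m).factorial : ℝ) / x^(2*m) := by
    have h4 : (Real.exp x)⁻¹ ≤ (x^(2*m)/((2*m).factorial : ℝ))⁻¹ :=
      inv_anti₀ (by positivity) h1
    rwa [inv_div] at h4
  refine h2.trans (le_of_eq ?_)
  have hxval : x^(2*m) = c^(2*m) / t^m := by
    rw [hx, div_pow]
    congr 1
    rw [pow_mul, Real.sq_sqrt ht.le]
  rw [hxval]
  field_simp
  rw [← mul_pow, mul_one_div_cancel hc.ne', one_pow]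

end Stmt5Aux

open Stmt5Aux

/-- If the skew-symmetric matrix `Θ` satisfies the Diophantine
condition `inf_{k∈ℤⁿ} |Θq − 2πk| ≥ C/|q|^{1+β}` on `𝒦^{inf}` (the `q` with
`Θq ∉ 2πℤⁿ`), then for Schwartz sequences `l_q, r_q`,
`∑_{q,k} l_q r_{−q} e^{−|Θq−2πk|²/4t} = ∑_{q∈𝒵} l_q r_{−q} + O(t^N)` as
`t → 0⁺`, for every `N > 0`. -/
theorem stmt5 (n : ℕ) (Θ : Matrix (Fin n) (Fin n) ℝ) (hΘ : Θᵀ = -Θ)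
    (C β : ℝ) (hC : 0 < C) (hβ : 0 ≤ β)
    (hdioph : ∀ q : Fin n → ℤ, q ∉ latticeZ Θ →
      C / Real.sqrt (sqnorm (intVec q)) ^ ((1 : ℝ) + β) ≤
        ⨅ k : Fin n → ℤ,
          Real.sqrt (sqnorm (Θ.mulVec (intVec q) - (2 * π) • intVec k)))
    (l r : (Fin n → ℤ) → ℂ) (hl : RapidDecay l) (hr : RapidDecay r) :
    ∀ N : ℝ, 0 < N → ∃ C' : ℝ, ∃ δ : ℝ, 0 < δ ∧ ∀ t : ℝ, 0 < t → t < δ →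
      ‖(∑' q : Fin n → ℤ, ∑' k : Fin n → ℤ,
          l q * r (-q) *
            Complex.exp
              (-(((sqnorm (Θ.mulVec (intVec q) - (2 * π) • intVec k)
                  / (4 * t) : ℝ)) : ℂ))) -
        ∑' q : latticeZ Θ, l q * r (-(q : Fin n → ℤ))‖ ≤ C' * t ^ N := by
  intro N hN
  classical
  set a : (Fin n → ℤ) → ℝ := fun q => ‖l q‖ * ‖r (-q)‖ with hadef
  set s : (Fin n → ℤ) → ℝ := fun q => Real.sqrt (sqnorm (intVec q)) with hsdef
  set M : ℕ := ⌈(4+4*β)*N⌉₊ with hMdef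
  set ν : ℕ := ⌈N⌉₊ with hνdef
  obtain ⟨cl, hcl⟩ := hl (2*n + M)
  obtain ⟨cr, hcr⟩ := hr 0
  have hcr' : ∀ p, ‖r p‖ ≤ cr := fun p => by
    have := hcr p; simpa using this
  set c := cl * cr with hcdef
  have ha_nonneg : ∀ q, 0 ≤ a q := fun q => mul_nonneg (norm_nonneg _) (norm_nonneg _)
  have hs0 : ∀ q, 0 ≤ s q := fun q => Real.sqrt_nonneg _
  have h1s : ∀ q, (1:ℝ) ≤ 1 + s q := fun q => by linarith [hs0 q]
  have h_a : ∀ q, a q * (1 + s q)^(2*n+M) ≤ c := by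
    intro q
    have h1 : ‖l q‖ * (1 + s q)^(2*n+M) ≤ cl := hcl q
    have hcl0 : 0 ≤ cl := le_trans (by positivity) h1
    calc a q * (1 + s q)^(2*n+M) = (‖l q‖ * (1 + s q)^(2*n+M)) * ‖r (-q)‖ := by
          rw [hadef]; ring
    _ ≤ cl * cr := mul_le_mul h1 (hcr' _) (norm_nonneg _) hcl0
  have hc0 : 0 ≤ c := le_trans (by positivity) (h_a 0)
  have hK2n : ∀ q, a q * (1 + s q)^(2*n) ≤ c := by
    intro q
    refine le_trans ?_ (h_a q)
    have := pow_le_pow_right₀ (h1s q) (Nat.le_add_right (2*n) M)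
    exact mul_le_mul_of_nonneg_left this (ha_nonneg q)
  have h1 : ∀ q, a q ≤ c * Fdec q := by
    intro q
    have hX : (0:ℝ) < (1 + s q)^(2*n) := by positivity
    have h2 : a q ≤ c / (1+s q)^(2*n) := by
      rw [le_div_iff₀ hX]; exact hK2n q
    calc a q ≤ c / (1+s q)^(2*n) := h2
    _ = c * (1 / (1+s q)^(2*n)) := by ring
    _ ≤ c * Fdec q := mul_le_mul_of_nonneg_left (Fdec_ge q) hc0
  have h2 : ∀ q, a q * (s q)^M ≤ c * Fdec q := by
    intro q
    have hX : (0:ℝ) < (1 + s q)^(2*n) := by positivity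
    have hmono : a q * (s q)^M * (1+s q)^(2*n) ≤ a q * (1+s q)^(2*n+M) := by
      have hsM : (s q)^M ≤ (1 + s q)^M :=
        pow_le_pow_left₀ (hs0 q) (by linarith [hs0 q]) M
      calc a q * (s q)^M * (1+s q)^(2*n)
          ≤ a q * (1 + s q)^M * (1+s q)^(2*n) := by
            have := mul_le_mul_of_nonneg_left hsM (ha_nonneg q)
            exact mul_le_mul_of_nonneg_right this hX.le
      _ = a q * (1+s q)^(2*n+M) := by rw [pow_add]; ring
    have hle : a q * (s q)^M ≤ c / (1+s q)^(2*n) := by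
      rw [le_div_iff₀ hX]; exact hmono.trans (h_a q)
    calc a q * (s q)^M ≤ c / (1+s q)^(2*n) := hle
    _ = c * (1 / (1+s q)^(2*n)) := by ring
    _ ≤ c * Fdec q := mul_le_mul_of_nonneg_left (Fdec_ge q) hc0
  set K1 : ℝ := ((2*ν).factorial : ℝ) * (8/C^2)^(2*ν) with hK1def
  set K2 : ℝ := ((2*ν).factorial : ℝ) * (2/π^2)^(2*ν) with hK2def
  have hK1nn : 0 ≤ K1 := by positivity
  have hK2nn : 0 ≤ K2 := by positivity
  set SF : ℝ := ∑' q : Fin n → ℤ, Fdec q with hSFdef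
  refine ⟨Ac n * (c * (K1 + K2 + 1) * SF), 1, one_pos, fun t ht ht1 => ?_⟩
  have ht1' : t ≤ 1 := ht1.le
  have htN : (0:ℝ) < t ^ N := Real.rpow_pos_of_pos ht N
  have htνN : t ^ (ν:ℕ) ≤ t ^ N := by
    rw [← Real.rpow_natCast t ν]
    exact Real.rpow_le_rpow_of_exponent_ge ht ht1' (Nat.le_ceil N)
  -- inner kernel facts
  have hgk := fun q : Fin n → ℤ =>
    gker_bound (Θ.mulVec (intVec q))
  have hgle : ∀ q k : Fin n → ℤ,
      Real.exp (-(sqnorm (Θ.mulVec (intVec q) - (2*π) • intVec k) / (4*t)))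
      ≤ Real.exp (-(sqnorm (Θ.mulVec (intVec q) - (2*π) • intVec k) / 8)) := by
    intro q k
    apply Real.exp_le_exp.2
    have h8 : sqnorm (Θ.mulVec (intVec q) - (2*π) • intVec k) / 8
        ≤ sqnorm (Θ.mulVec (intVec q) - (2*π) • intVec k) / (4*t) :=
      div_le_div_of_nonneg_left (sqnorm_nonneg _) (by linarith) (by linarith)
    linarith
  have hgsum : ∀ q, Summable (fun k : Fin n → ℤ =>
      Real.exp (-(sqnorm (Θ.mulVec (intVec q) - (2*π) • intVec k) / (4*t)))) :=
    fun q => Summable.of_nonneg_of_le (fun k => (Real.exp_pos _).le) (hgle q) (hgk q).1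
  set I : (Fin n → ℤ) → ℝ := fun q => ∑' k : Fin n → ℤ,
      Real.exp (-(sqnorm (Θ.mulVec (intVec q) - (2*π) • intVec k) / (4*t))) with hIdef
  have hI_nonneg : ∀ q, 0 ≤ I q :=
    fun q => tsum_nonneg fun k => (Real.exp_pos _).le
  have hI_le : ∀ q, I q ≤ Ac n :=
    fun q => (Summable.tsum_le_tsum (hgle q) (hgsum q) (hgk q).1).trans (hgk q).2
  set f : (Fin n → ℤ) → ℂ := fun q => l q * r (-q) * (I q : ℂ) with hfdef
  set h : (Fin n → ℤ) → ℂ :=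
    fun q => Set.indicator (latticeZ Θ) (fun p => l p * r (-p)) q with hhdef
  have hnormf : ∀ q, ‖f q‖ = a q * I q := by
    intro q
    rw [hfdef]
    simp only [norm_mul, Complex.norm_real]
    rw [Real.norm_of_nonneg (hI_nonneg q), hadef]
  have hnormh : ∀ q, ‖h q‖ ≤ a q := by
    intro q
    by_cases hq : q ∈ latticeZ Θ
    · have he : h q = l q * r (-q) := by
        simp only [hhdef]; exact Set.indicator_of_mem hq _
      rw [he, norm_mul, hadef]
    · have he : h q = 0 := by
        simp only [hhdef]; exact Set.indicator_of_notMem hq _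
      rw [he, norm_zero]; exact ha_nonneg q
  have hsumFdecc : Summable (fun q : Fin n → ℤ => c * Fdec q * Ac n) :=
    (((Fdec_summable n).mul_left c).mul_right (Ac n))
  have hsumf : Summable f := by
    refine Summable.of_norm (Summable.of_nonneg_of_le (fun q => norm_nonneg _)
      (fun q => ?_) hsumFdecc)
    rw [hnormf q]
    exact mul_le_mul (h1 q) (hI_le q) (hI_nonneg q) (mul_nonneg hc0 (Fdec_nonneg q))
  have hsumh : Summable h := by
    refine Summable.of_norm (Summable.of_nonneg_of_le (fun q => norm_nonneg _)
      (fun q => (hnormh q).trans (h1 q)) ((Fdec_summable n).mul_left c))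
  -- rewrite the double sum
  have hinner : ∀ q : Fin n → ℤ,
      (∑' k : Fin n → ℤ, l q * r (-q) *
        Complex.exp (-(((sqnorm (Θ.mulVec (intVec q) - (2 * π) • intVec k)
            / (4 * t) : ℝ)) : ℂ))) = f q := by
    intro q
    have e1 : ∀ k : Fin n → ℤ,
        l q * r (-q) * Complex.exp (-(((sqnorm (Θ.mulVec (intVec q) - (2 * π) • intVec k)
            / (4 * t) : ℝ)) : ℂ))
        = (l q * r (-q)) *
          ((Real.exp (-(sqnorm (Θ.mulVec (intVec q) - (2*π) • intVec k) / (4*t))) : ℝ) : ℂ) := by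
      intro k
      rw [← Complex.ofReal_neg, Complex.ofReal_exp]
    rw [tsum_congr e1, tsum_mul_left, ← Complex.ofReal_tsum]
  have hsub : (∑' q : latticeZ Θ, l q * r (-(q : Fin n → ℤ))) = ∑' q, h q := by
    rw [hhdef]
    exact tsum_subtype (latticeZ Θ) (fun p => l p * r (-p))
  rw [tsum_congr hinner, hsub, ← Summable.tsum_sub hsumf hsumh]
  -- pointwise bound
  have hE2 : Real.exp (-(π^2/(2*t))) ≤ K2 * t ^ N := by
    have hsq : 0 < Real.sqrt t := Real.sqrt_pos.2 ht
    have htle : t ≤ Real.sqrt t := by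
      nlinarith [Real.sq_sqrt ht.le, Real.sqrt_nonneg t, ht1',
        mul_nonneg (Real.sqrt_nonneg t) (sub_nonneg.2 ht1')]
    have e1 : (π^2/2) / Real.sqrt t ≤ π^2/(2*t) := by
      rw [show π^2/(2*t) = (π^2/2)/t from by ring]
      exact div_le_div_of_nonneg_left (by positivity) ht htle
    have e2 : Real.exp (-(π^2/(2*t))) ≤ Real.exp (-((π^2/2) / Real.sqrt t)) :=
      Real.exp_le_exp.2 (by linarith)
    have e3 := exp_bound (c := π^2/2) (by positivity) ht ν
    have e4 : (1/(π^2/2)) = 2/π^2 := by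
      rw [one_div_div]
    rw [e4] at e3
    calc Real.exp (-(π^2/(2*t))) ≤ ((2*ν).factorial : ℝ) * (2/π^2)^(2*ν) * t^(ν:ℕ) :=
      e2.trans e3
    _ = K2 * t^(ν:ℕ) := by rw [hK2def]
    _ ≤ K2 * t ^ N := mul_le_mul_of_nonneg_left htνN hK2nn
  have hptwise : ∀ q : Fin n → ℤ,
      ‖f q - h q‖ ≤ (Ac n * (c * (K1 + K2 + 1)) * t ^ N) * Fdec q := by
    intro q
    by_cases hq : q ∈ latticeZ Θ
    · -- lattice case
      obtain ⟨m, hm⟩ := hq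
      have hgm : Real.exp (-(sqnorm (Θ.mulVec (intVec q) - (2*π) • intVec m) / (4*t))) = 1 := by
        rw [hm, sub_self]
        simp [sqnorm]
      have hsplit : I q = 1 + ∑' k, ite (k = m) 0
          (Real.exp (-(sqnorm (Θ.mulVec (intVec q) - (2*π) • intVec k) / (4*t)))) := by
        simp only [hIdef]
        rw [Summable.tsum_eq_add_tsum_ite (hgsum q) m, hgm]
      have hite : ∀ k : Fin n → ℤ, ite (k = m) 0
          (Real.exp (-(sqnorm (Θ.mulVec (intVec q) - (2*π) • intVec k) / (4*t))))
          ≤ Real.exp (-(π^2/(2*t))) *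
            Real.exp (-(sqnorm (Θ.mulVec (intVec q) - (2*π) • intVec k) / 8)) := by
        intro k
        by_cases hk : k = m
        · simp only [hk, if_pos rfl]
          positivity
        · rw [if_neg hk]
          set u := sqnorm (Θ.mulVec (intVec q) - (2*π) • intVec k) with hu
          have hu0 : 0 ≤ u := sqnorm_nonneg _
          have hu4 : 4*π^2 ≤ u := by
            have hrw : Θ.mulVec (intVec q) - (2*π) • intVec k = (2*π) • intVec (m - k) := by
              rw [hm, intVec_sub, smul_sub]
            rw [hu, hrw, sqnorm_smul]
            have hmk : m - k ≠ 0 := sub_ne_zero.mpr (Ne.symm hk)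
            have := one_le_sqnorm_intVec hmk
            nlinarith [Real.pi_pos]
          rw [← Real.exp_add]
          apply Real.exp_le_exp.2
          have e1 : π^2/(2*t) ≤ u/(8*t) := by
            rw [div_le_div_iff₀ (by positivity) (by positivity)]
            nlinarith
          have e2 : u/8 ≤ u/(8*t) :=
            div_le_div_of_nonneg_left hu0 (by positivity) (by linarith)
          have e3 : u/(8*t) + u/(8*t) = u/(4*t) := by ring
          linarith
      have hsumite : Summable (fun k : Fin n → ℤ => ite (k = m) 0
          (Real.exp (-(sqnorm (Θ.mulVec (intVec q) - (2*π) • intVec k) / (4*t))))) := by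
        refine Summable.of_nonneg_of_le (fun k => ?_) (fun k => ?_) (hgsum q)
        · by_cases hk : k = m <;> simp [hk, (Real.exp_pos _).le]
        · by_cases hk : k = m <;> simp [hk, (Real.exp_pos _).le]
      have hR : ∑' k, ite (k = m) 0
          (Real.exp (-(sqnorm (Θ.mulVec (intVec q) - (2*π) • intVec k) / (4*t))))
          ≤ Real.exp (-(π^2/(2*t))) * Ac n := by
        calc _ ≤ ∑' k : Fin n → ℤ, Real.exp (-(π^2/(2*t))) *
            Real.exp (-(sqnorm (Θ.mulVec (intVec q) - (2*π) • intVec k) / 8)) :=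
          Summable.tsum_le_tsum hite hsumite ((hgk q).1.mul_left _)
        _ = Real.exp (-(π^2/(2*t))) * ∑' k : Fin n → ℤ,
            Real.exp (-(sqnorm (Θ.mulVec (intVec q) - (2*π) • intVec k) / 8)) :=
          tsum_mul_left
        _ ≤ Real.exp (-(π^2/(2*t))) * Ac n :=
          mul_le_mul_of_nonneg_left (hgk q).2 (Real.exp_pos _).le
      have hR0 : 0 ≤ ∑' k, ite (k = m) 0
          (Real.exp (-(sqnorm (Θ.mulVec (intVec q) - (2*π) • intVec k) / (4*t)))) :=
        tsum_nonneg fun k => by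
          by_cases hk : k = m <;> simp [hk, (Real.exp_pos _).le]
      have hqmem : q ∈ latticeZ Θ := ⟨m, hm⟩
      have hfh : f q - h q = l q * r (-q) * ((I q - 1 : ℝ) : ℂ) := by
        simp only [hfdef, hhdef]
        rw [Set.indicator_of_mem hqmem]
        push_cast
        ring
      rw [hfh]
      rw [norm_mul, norm_mul, Complex.norm_real, Real.norm_eq_abs]
      have habs : |I q - 1| ≤ Real.exp (-(π^2/(2*t))) * Ac n := by
        rw [hsplit]
        rw [abs_of_nonneg (by linarith [hR0])]
        simpa using hR
      calc ‖l q‖ * ‖r (-q)‖ * |I q - 1|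
          ≤ a q * (Real.exp (-(π^2/(2*t))) * Ac n) :=
            mul_le_mul_of_nonneg_left habs (mul_nonneg (norm_nonneg _) (norm_nonneg _))
      _ ≤ (c * Fdec q) * ((K2 * t ^ N) * Ac n) := by
            exact mul_le_mul (h1 q) (mul_le_mul_of_nonneg_right hE2 (Ac_nonneg n))
              (mul_nonneg (Real.exp_pos _).le (Ac_nonneg n)) (mul_nonneg hc0 (Fdec_nonneg q))
      _ ≤ (Ac n * (c * (K1 + K2 + 1)) * t ^ N) * Fdec q := by
            nlinarith [Fdec_nonneg q, Ac_nonneg n, hc0, hK1nn, hK2nn, htN.le,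
              mul_nonneg (mul_nonneg hc0 (Fdec_nonneg q)) (mul_nonneg htN.le (Ac_nonneg n))]
    · -- non-lattice case
      have hq0 : q ≠ 0 := by
        intro hq0
        exact hq ⟨0, by simp [hq0, intVec_zero, Matrix.mulVec_zero]⟩
      have hs1 : 1 ≤ s q := by
        rw [hsdef]
        have := Real.sqrt_le_sqrt (one_le_sqnorm_intVec hq0)
        simpa [Real.sqrt_one] using this
      have spos : 0 < s q := by linarith
      set D : ℝ := C / s q ^ ((1:ℝ)+β) with hDdef
      have hDpos : 0 < D := div_pos hC (Real.rpow_pos_of_pos spos _)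
      have hDle : ∀ k : Fin n → ℤ, D^2 ≤ sqnorm (Θ.mulVec (intVec q) - (2*π) • intVec k) := by
        intro k
        have hbdd : BddBelow (Set.range fun k : Fin n → ℤ =>
            Real.sqrt (sqnorm (Θ.mulVec (intVec q) - (2*π) • intVec k))) := by
          refine ⟨0, ?_⟩
          rintro _ ⟨k, rfl⟩
          exact Real.sqrt_nonneg _
        have h5 : D ≤ Real.sqrt (sqnorm (Θ.mulVec (intVec q) - (2*π) • intVec k)) := by
          refine le_trans ?_ (ciInf_le hbdd k)
          rw [hDdef, hsdef]
          exact hdioph q hq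
        calc D^2 ≤ (Real.sqrt (sqnorm (Θ.mulVec (intVec q) - (2*π) • intVec k)))^2 := by
              exact pow_le_pow_left₀ hDpos.le h5 2
        _ = sqnorm (Θ.mulVec (intVec q) - (2*π) • intVec k) :=
          Real.sq_sqrt (sqnorm_nonneg _)
      have hIb : I q ≤ Real.exp (-(D^2/(8*t))) * Ac n := by
        have hptk : ∀ k : Fin n → ℤ,
            Real.exp (-(sqnorm (Θ.mulVec (intVec q) - (2*π) • intVec k) / (4*t)))
            ≤ Real.exp (-(D^2/(8*t))) *
              Real.exp (-(sqnorm (Θ.mulVec (intVec q) - (2*π) • intVec k) / 8)) := by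
          intro k
          set u := sqnorm (Θ.mulVec (intVec q) - (2*π) • intVec k) with hu
          have hu0 : 0 ≤ u := sqnorm_nonneg _
          have hDu : D^2 ≤ u := hDle k
          rw [← Real.exp_add]
          apply Real.exp_le_exp.2
          have e1 : D^2/(8*t) ≤ u/(8*t) := by gcongr
          have e2 : u/8 ≤ u/(8*t) :=
            div_le_div_of_nonneg_left hu0 (by positivity) (by linarith)
          have e3 : u/(8*t) + u/(8*t) = u/(4*t) := by ring
          linarith
        simp only [hIdef]
        calc (∑' k : Fin n → ℤ,
            Real.exp (-(sqnorm (Θ.mulVec (intVec q) - (2*π) • intVec k) / (4*t))))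
            ≤ ∑' k : Fin n → ℤ, Real.exp (-(D^2/(8*t))) *
              Real.exp (-(sqnorm (Θ.mulVec (intVec q) - (2*π) • intVec k) / 8)) :=
          Summable.tsum_le_tsum hptk (hgsum q) ((hgk q).1.mul_left _)
        _ = Real.exp (-(D^2/(8*t))) * ∑' k : Fin n → ℤ,
              Real.exp (-(sqnorm (Θ.mulVec (intVec q) - (2*π) • intVec k) / 8)) :=
          tsum_mul_left
        _ ≤ Real.exp (-(D^2/(8*t))) * Ac n :=
          mul_le_mul_of_nonneg_left (hgk q).2 (Real.exp_pos _).le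
      -- the key decay estimate
      have hae : a q * Real.exp (-(D^2/(8*t))) ≤ c * (K1+1) * Fdec q * t ^ N := by
        by_cases hcase : s q ^ ((2:ℝ)+2*β) ≤ t ^ (-(1/2:ℝ))
        · -- small q
          have hD2 : D^2 = C^2 / s q ^ ((2:ℝ)+2*β) := by
            rw [hDdef, div_pow]
            congr 1
            rw [← Real.rpow_natCast (s q ^ ((1:ℝ)+β)) 2, ← Real.rpow_mul spos.le]
            congr 1
            push_cast
            ring
          have hrp : 0 < s q ^ ((2:ℝ)+2*β) := Real.rpow_pos_of_pos spos _
          have hsq : 0 < Real.sqrt t := Real.sqrt_pos.2 ht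
          have e4 : t * t ^ (-(1/2:ℝ)) = Real.sqrt t := by
            nth_rewrite 1 [← Real.rpow_one t]
            rw [← Real.rpow_add ht]
            rw [Real.sqrt_eq_rpow]
            norm_num
          have hts : t * s q ^ ((2:ℝ)+2*β) ≤ Real.sqrt t := by
            rw [← e4]
            exact mul_le_mul_of_nonneg_left hcase ht.le
          have hfrac : C^2/(8*Real.sqrt t) ≤ D^2/(8*t) := by
            have heq : D^2/(8*t) = C^2 / (8*(t * s q ^ ((2:ℝ)+2*β))) := by
              rw [hD2, div_div]
              congr 1
              ring
            rw [heq]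
            exact div_le_div_of_nonneg_left (by positivity) (by positivity) (by linarith)
          have he : Real.exp (-(D^2/(8*t))) ≤ Real.exp (-(C^2/(8*Real.sqrt t))) :=
            Real.exp_le_exp.2 (by linarith)
          have e5 := exp_bound (c := C^2/8) (by positivity) ht ν
          have e6 : (1/(C^2/8)) = 8/C^2 := one_div_div _ _
          rw [e6] at e5
          have e7 : C^2/8/Real.sqrt t = C^2/(8*Real.sqrt t) := by
            rw [div_div]
          rw [e7] at e5
          have hEfin : Real.exp (-(D^2/(8*t))) ≤ K1 * t ^ N := by
            calc Real.exp (-(D^2/(8*t))) ≤ ((2*ν).factorial : ℝ) * (8/C^2)^(2*ν) * t^(ν:ℕ) :=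
              he.trans e5
            _ = K1 * t^(ν:ℕ) := by rw [hK1def]
            _ ≤ K1 * t ^ N := mul_le_mul_of_nonneg_left htνN hK1nn
          calc a q * Real.exp (-(D^2/(8*t))) ≤ (c * Fdec q) * (K1 * t ^ N) :=
            mul_le_mul (h1 q) hEfin (Real.exp_pos _).le (mul_nonneg hc0 (Fdec_nonneg q))
          _ ≤ c * (K1+1) * Fdec q * t ^ N := by
            nlinarith [mul_nonneg (mul_nonneg hc0 (Fdec_nonneg q)) htN.le]
        · -- large q
          push_neg at hcase
          have hsM : t ^ (-N) ≤ s q ^ (M:ℕ) := by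
            have e5 : t ^ (-N) = (t ^ (-(1/2:ℝ))) ^ (2*N) := by
              rw [← Real.rpow_mul ht.le]
              congr 1
              ring
            have e6 : (t ^ (-(1/2:ℝ))) ^ (2*N) ≤ (s q ^ ((2:ℝ)+2*β)) ^ (2*N) :=
              Real.rpow_le_rpow (Real.rpow_nonneg ht.le _) hcase.le (by positivity)
            have e7 : (s q ^ ((2:ℝ)+2*β)) ^ (2*N) = s q ^ (((2:ℝ)+2*β)*(2*N)) :=
              (Real.rpow_mul spos.le _ _).symm
            have e8 : s q ^ (((2:ℝ)+2*β)*(2*N)) ≤ s q ^ ((M:ℕ):ℝ) := by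
              apply Real.rpow_le_rpow_of_exponent_le hs1
              have := Nat.le_ceil ((4+4*β)*N)
              rw [← hMdef] at this
              nlinarith [this]
            rw [e5]
            calc (t ^ (-(1/2:ℝ))) ^ (2*N) ≤ s q ^ (((2:ℝ)+2*β)*(2*N)) := e6.trans_eq e7
            _ ≤ s q ^ ((M:ℕ):ℝ) := e8
            _ = s q ^ (M:ℕ) := Real.rpow_natCast _ _
          have h1tN : 1 ≤ s q ^ (M:ℕ) * t ^ N := by
            have e9 : t ^ (-N) * t ^ N = 1 := by
              rw [← Real.rpow_add ht]
              norm_num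
            calc (1:ℝ) = t ^ (-N) * t ^ N := e9.symm
            _ ≤ s q ^ (M:ℕ) * t ^ N := mul_le_mul_of_nonneg_right hsM htN.le
          have hexple : Real.exp (-(D^2/(8*t))) ≤ 1 := by
            rw [Real.exp_le_one_iff]
            have : 0 < D^2/(8*t) := by positivity
            linarith
          calc a q * Real.exp (-(D^2/(8*t))) ≤ a q * 1 :=
            mul_le_mul_of_nonneg_left hexple (ha_nonneg q)
          _ = a q := mul_one _
          _ ≤ a q * (s q ^ (M:ℕ) * t ^ N) := le_mul_of_one_le_right (ha_nonneg q) h1tN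
          _ = (a q * s q ^ (M:ℕ)) * t ^ N := by ring
          _ ≤ (c * Fdec q) * t ^ N := mul_le_mul_of_nonneg_right (h2 q) htN.le
          _ ≤ c * (K1+1) * Fdec q * t ^ N := by
            nlinarith [mul_nonneg (mul_nonneg hc0 (Fdec_nonneg q)) htN.le]
      -- put the non-lattice case together
      have hfh : f q - h q = f q := by
        simp only [hhdef]
        rw [Set.indicator_of_notMem hq, sub_zero]
      rw [hfh, hnormf q]
      calc a q * I q ≤ a q * (Real.exp (-(D^2/(8*t))) * Ac n) :=
        mul_le_mul_of_nonneg_left (hIb) (ha_nonneg q)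
      _ = (a q * Real.exp (-(D^2/(8*t)))) * Ac n := by ring
      _ ≤ (c * (K1+1) * Fdec q * t ^ N) * Ac n :=
        mul_le_mul_of_nonneg_right hae (Ac_nonneg n)
      _ ≤ (Ac n * (c * (K1 + K2 + 1)) * t ^ N) * Fdec q := by
        nlinarith [mul_nonneg (mul_nonneg (mul_nonneg hc0 (Fdec_nonneg q)) htN.le)
          (Ac_nonneg n), hK2nn]
  -- conclude
  have hbnd_sum : Summable (fun q : Fin n → ℤ =>
      (Ac n * (c * (K1 + K2 + 1)) * t ^ N) * Fdec q) :=
    (Fdec_summable n).mul_left _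
  have hnorm_sum : Summable (fun q => ‖f q - h q‖) :=
    Summable.of_nonneg_of_le (fun q => norm_nonneg _) hptwise hbnd_sum
  calc ‖∑' q, (f q - h q)‖ ≤ ∑' q, ‖f q - h q‖ := norm_tsum_le_tsum_norm hnorm_sum
  _ ≤ ∑' q, (Ac n * (c * (K1 + K2 + 1)) * t ^ N) * Fdec q :=
    Summable.tsum_le_tsum hptwise hnorm_sum hbnd_sum
  _ = (Ac n * (c * (K1 + K2 + 1)) * t ^ N) * SF := by
    rw [tsum_mul_left, hSFdef]
  _ = Ac n * (c * (K1 + K2 + 1) * SF) * t ^ N := by ring
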